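/- Let λ and μ be r-multipartitions of n, let s be a standard λ-tableau and t a standard μ-tableau. Then s = t (in particular λ = μ) if and only if cont_s(k) = cont_t(k) for all 1 ≤ k ≤ n. -/

import Mathlib

set_option maxHeartbeats 1000000
set_option synthInstance.maxHeartbeats 400000


noncomputable section

namespace MPT

open scoped Classical

/-- The field `ℚ(ε̇)`, where `ε̇ ∈ ℂ`. -/
def Kf (ε : ℂ) : IntermediateField ℚ ℂ := IntermediateField.adjoin ℚ {ε}

/-- The field `F = ℚ(ε̇)(q̇, Q̇_1, …, Q̇_d)` of rational functions over `ℚ(ε̇)` in the `d + 1`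
algebraically independent indeterminates `q̇, Q̇_1, …, Q̇_d`. -/
abbrev F (ε : ℂ) (d : ℕ) : Type :=
  FractionRing (MvPolynomial (Fin (d + 1)) (Kf ε))

/-- `ε̇` as an element of `F`. -/
def edot (ε : ℂ) (d : ℕ) : F ε d :=
  algebraMap (MvPolynomial (Fin (d + 1)) (Kf ε)) (F ε d)
    (MvPolynomial.C ⟨ε, IntermediateField.subset_adjoin ℚ {ε} rfl⟩)

/-- The indeterminate `q̇` in `F`. -/
def qdot (ε : ℂ) (d : ℕ) : F ε d :=
  algebraMap (MvPolynomial (Fin (d + 1)) (Kf ε)) (F ε d)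
    (MvPolynomial.X (⟨0, Nat.succ_pos d⟩ : Fin (d + 1)))

/-- The indeterminate `Q̇_c` in `F`, for `1 ≤ c ≤ d`. -/
def Qdot (ε : ℂ) (d : ℕ) (c : ℕ) : F ε d :=
  algebraMap (MvPolynomial (Fin (d + 1)) (Kf ε)) (F ε d)
    (MvPolynomial.X (⟨c % (d + 1), Nat.mod_lt c (Nat.succ_pos d)⟩ : Fin (d + 1)))

/-- The content `ε̇^j q̇^(b-a) Q̇_c ∈ F` of a box in row `a` and column `b` of component number
`comp = c + j*d` (components numbered `1, …, r` with `1 ≤ c ≤ d` and `0 ≤ j ≤ p-1`). -/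
def contpos (ε : ℂ) (d : ℕ) (a b comp : ℕ) : F ε d :=
  edot ε d ^ ((comp - 1) / d) * qdot ε d ^ ((b : ℤ) - (a : ℤ)) * Qdot ε d ((comp - 1) % d + 1)

/-- `lam` is an `r`-multipartition of `n`: `lam c` is the `c`-th component for `1 ≤ c ≤ r`
(rows indexed from `1`), an out-of-range datum vanishes, each component is a partition, and the
sizes of the components sum to `n`. -/
def IsMultipartition (r n : ℕ) (lam : ℕ → ℕ → ℕ) : Prop :=
  (∀ c a : ℕ, c < 1 ∨ r < c → lam c a = 0) ∧
  (∀ c : ℕ, lam c 0 = 0) ∧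
  (∀ c a : ℕ, 1 ≤ a → lam c (a + 1) ≤ lam c a) ∧
  (∀ c a : ℕ, n < a → lam c a = 0) ∧
  (∑ c ∈ Finset.Icc 1 r, ∑ a ∈ Finset.Icc 1 n, lam c a = n)

/-- `(a, b, c)` is a box of the diagram `[lam]`: row `a ≥ 1`, column `1 ≤ b ≤ lam c a`,
component `c`. -/
def InDiag (lam : ℕ → ℕ → ℕ) (a b c : ℕ) : Prop :=
  1 ≤ a ∧ 1 ≤ b ∧ b ≤ lam c a

/-- `s` is a standard `lam`-tableau: a bijection from the diagram of `lam` onto `{1, …, n}`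
(extended by `0` off the diagram) whose entries increase along each row and down each column of
every component. -/
def IsStdTableau (n : ℕ) (lam : ℕ → ℕ → ℕ) (s : ℕ → ℕ → ℕ → ℕ) : Prop :=
  (∀ a b c : ℕ, ¬ InDiag lam a b c → s a b c = 0) ∧
  (∀ a b c : ℕ, InDiag lam a b c → 1 ≤ s a b c ∧ s a b c ≤ n) ∧
  (∀ k : ℕ, 1 ≤ k → k ≤ n →
    ∃! x : ℕ × ℕ × ℕ, InDiag lam x.1 x.2.1 x.2.2 ∧ s x.1 x.2.1 x.2.2 = k) ∧
  (∀ a b c : ℕ, InDiag lam a b c → InDiag lam a (b + 1) c → s a b c < s a (b + 1) c) ∧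
  (∀ a b c : ℕ, InDiag lam a b c → InDiag lam (a + 1) b c → s a b c < s (a + 1) b c)

/-- The content `cont_s(k) ∈ F` of `k` in the standard tableau `s`: the content of the box of
the diagram in which `k` appears. -/
def cont (ε : ℂ) (d : ℕ) (lam : ℕ → ℕ → ℕ) (s : ℕ → ℕ → ℕ → ℕ) (k : ℕ) : F ε d :=
  if h : ∃ x : ℕ × ℕ × ℕ, InDiag lam x.1 x.2.1 x.2.2 ∧ s x.1 x.2.1 x.2.2 = k then
    contpos ε d h.choose.1 h.choose.2.1 h.choose.2.2
  else 0

lemma key (ε : ℂ) (p d : ℕ) (hp : 1 ≤ p) (hd : 1 ≤ d) (hε : IsPrimitiveRoot ε p)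
    (j j' : ℕ) (m m' : ℤ) (c c' : ℕ) (hj : j < p) (hj' : j' < p)
    (hc1 : 1 ≤ c) (hc2 : c ≤ d) (hc1' : 1 ≤ c') (hc2' : c' ≤ d)
    (h : edot ε d ^ j * qdot ε d ^ m * Qdot ε d c
       = edot ε d ^ j' * qdot ε d ^ m' * Qdot ε d c') :
    j = j' ∧ m = m' ∧ c = c' := by
  classical
  have hinj : Function.Injective
      (algebraMap (MvPolynomial (Fin (d + 1)) (Kf ε)) (F ε d)) :=
    IsFractionRing.injective _ _
  have hεne : ε ≠ 0 := hε.ne_zero (by omega)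
  have heKne : (⟨ε, IntermediateField.subset_adjoin ℚ {ε} rfl⟩ : Kf ε) ≠ 0 := by
    intro hz; exact hεne (congrArg Subtype.val hz)
  have hu : qdot ε d ≠ 0 := by
    intro hz
    have hX0 : (MvPolynomial.X (⟨0, Nat.succ_pos d⟩ : Fin (d+1)) :
        MvPolynomial (Fin (d + 1)) (Kf ε)) = 0 := by
      apply hinj
      rw [map_zero]
      rw [qdot] at hz
      exact hz
    exact MvPolynomial.X_ne_zero _ hX0
  set N : ℕ := m.natAbs + m'.natAbs with hN
  have hmN : 0 ≤ m + N := by omega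
  have hmN' : 0 ≤ m' + N := by omega
  have h2 : edot ε d ^ j * qdot ε d ^ ((m + N).toNat) * Qdot ε d c
      = edot ε d ^ j' * qdot ε d ^ ((m' + N).toNat) * Qdot ε d c' := by
    have e1 : (qdot ε d) ^ ((m + N).toNat) = qdot ε d ^ m * qdot ε d ^ (N : ℤ) := by
      rw [← zpow_natCast, Int.toNat_of_nonneg hmN, zpow_add₀ hu]
    have e2 : (qdot ε d) ^ ((m' + N).toNat) = qdot ε d ^ m' * qdot ε d ^ (N : ℤ) := by
      rw [← zpow_natCast, Int.toNat_of_nonneg hmN', zpow_add₀ hu]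
    rw [e1, e2, show edot ε d ^ j * (qdot ε d ^ m * qdot ε d ^ (N:ℤ)) * Qdot ε d c
        = edot ε d ^ j * qdot ε d ^ m * Qdot ε d c * qdot ε d ^ (N:ℤ) by ring,
      show edot ε d ^ j' * (qdot ε d ^ m' * qdot ε d ^ (N:ℤ)) * Qdot ε d c'
        = edot ε d ^ j' * qdot ε d ^ m' * Qdot ε d c' * qdot ε d ^ (N:ℤ) by ring, h]
  have hcmod : c % (d+1) = c := Nat.mod_eq_of_lt (by omega)
  have hcmod' : c' % (d+1) = c' := Nat.mod_eq_of_lt (by omega)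
  set cF : Fin (d+1) := ⟨c % (d+1), Nat.mod_lt c (Nat.succ_pos d)⟩ with hcF
  set cF' : Fin (d+1) := ⟨c' % (d+1), Nat.mod_lt c' (Nat.succ_pos d)⟩ with hcF'
  set zF : Fin (d+1) := ⟨0, Nat.succ_pos d⟩ with hzF
  have hcFz : cF ≠ zF := by simp [hcF, hzF, Fin.ext_iff, hcmod]; omega
  have hcFz' : cF' ≠ zF := by simp [hcF', hzF, Fin.ext_iff, hcmod']; omega
  have h3 : algebraMap (MvPolynomial (Fin (d + 1)) (Kf ε)) (F ε d)
        (MvPolynomial.C ⟨ε, IntermediateField.subset_adjoin ℚ {ε} rfl⟩ ^ j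
          * MvPolynomial.X zF ^ ((m + N).toNat) * MvPolynomial.X cF)
      = algebraMap (MvPolynomial (Fin (d + 1)) (Kf ε)) (F ε d)
        (MvPolynomial.C ⟨ε, IntermediateField.subset_adjoin ℚ {ε} rfl⟩ ^ j'
          * MvPolynomial.X zF ^ ((m' + N).toNat) * MvPolynomial.X cF') := by
    simp only [map_mul, map_pow]
    simp only [edot, qdot, Qdot] at h2
    convert h2 using 3
  have h4 := hinj h3
  rw [← map_pow, ← map_pow, MvPolynomial.C_mul_X_pow_eq_monomial,
    MvPolynomial.C_mul_X_pow_eq_monomial] at h4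
  rw [show (MvPolynomial.X cF : MvPolynomial (Fin (d + 1)) (Kf ε))
        = MvPolynomial.monomial (Finsupp.single cF 1) 1 by
      rw [← pow_one (MvPolynomial.X cF)]; exact MvPolynomial.X_pow_eq_monomial,
    show (MvPolynomial.X cF' : MvPolynomial (Fin (d + 1)) (Kf ε))
        = MvPolynomial.monomial (Finsupp.single cF' 1) 1 by
      rw [← pow_one (MvPolynomial.X cF')]; exact MvPolynomial.X_pow_eq_monomial] at h4
  rw [MvPolynomial.monomial_mul, MvPolynomial.monomial_mul,
    MvPolynomial.monomial_eq_monomial_iff] at h4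
  have hene : (⟨ε, IntermediateField.subset_adjoin ℚ {ε} rfl⟩ : Kf ε) ^ j * 1 ≠ 0 := by
    rw [mul_one]
    exact pow_ne_zero _ heKne
  rcases h4 with ⟨hsup, hcoef⟩ | ⟨hz, _⟩
  · have h0 := DFunLike.congr_fun hsup zF
    rw [Finsupp.add_apply, Finsupp.add_apply, Finsupp.single_eq_same,
      Finsupp.single_eq_same, Finsupp.single_eq_of_ne' hcFz,
      Finsupp.single_eq_of_ne' hcFz'] at h0
    have hmm : m = m' := by omega
    have hcc : cF = cF' := by
      by_contra hne
      have h1 := DFunLike.congr_fun hsup cF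
      rw [Finsupp.add_apply, Finsupp.add_apply, Finsupp.single_eq_same,
        Finsupp.single_eq_of_ne' (Ne.symm hcFz),
        Finsupp.single_eq_of_ne' (Ne.symm hcFz),
        Finsupp.single_eq_of_ne' (Ne.symm hne)] at h1
      omega
    have hc : c = c' := by
      have := congrArg Fin.val hcc
      simpa [hcF, hcF', hcmod, hcmod'] using this
    have hjj : j = j' := by
      apply hε.pow_inj hj hj'
      have hkk : (⟨ε, IntermediateField.subset_adjoin ℚ {ε} rfl⟩ : Kf ε) ^ j
          = (⟨ε, IntermediateField.subset_adjoin ℚ {ε} rfl⟩ : Kf ε) ^ j' := by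
        simpa using hcoef
      simpa using congrArg Subtype.val hkk
    exact ⟨hjj, hmm, hc⟩
  · exact absurd hz hene


lemma lam_antitone {r n : ℕ} {lam : ℕ → ℕ → ℕ} (hlam : IsMultipartition r n lam)
    {c a a' : ℕ} (h1 : 1 ≤ a) (h : a ≤ a') : lam c a' ≤ lam c a := by
  induction a', h using Nat.le_induction with
  | base => exact le_rfl
  | succ a' ha ih => exact le_trans (hlam.2.2.1 c a' (le_trans h1 ha)) ih

lemma comp_range {r n : ℕ} {lam : ℕ → ℕ → ℕ} (hlam : IsMultipartition r n lam)
    {a b c : ℕ} (h : InDiag lam a b c) : 1 ≤ c ∧ c ≤ r := by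
  by_contra hcon
  have := hlam.1 c a (by omega)
  obtain ⟨_, h2, h3⟩ := h
  omega

lemma s_col_le {n : ℕ} {lam : ℕ → ℕ → ℕ} {s : ℕ → ℕ → ℕ → ℕ}
    (hlam : IsMultipartition r n lam) (hs : IsStdTableau n lam s)
    {a a' b c : ℕ} (ha1 : 1 ≤ a) (ha : a ≤ a') (hIn : InDiag lam a' b c) :
    s a b c ≤ s a' b c := by
  induction a', ha using Nat.le_induction with
  | base => exact le_rfl
  | succ a' ha ih =>
    have hIn' : InDiag lam a' b c :=
      ⟨le_trans ha1 ha, hIn.2.1, le_trans hIn.2.2 (hlam.2.2.1 c a' (le_trans ha1 ha))⟩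
    exact le_trans (ih hIn') (le_of_lt (hs.2.2.2.2 a' b c hIn' hIn))

lemma s_row_le {n : ℕ} {lam : ℕ → ℕ → ℕ} {s : ℕ → ℕ → ℕ → ℕ}
    (hlam : IsMultipartition r n lam) (hs : IsStdTableau n lam s)
    {a b b' c : ℕ} (hb1 : 1 ≤ b) (hb : b ≤ b') (hIn : InDiag lam a b' c) :
    s a b c ≤ s a b' c := by
  induction b', hb using Nat.le_induction with
  | base => exact le_rfl
  | succ b' hb ih =>
    have hIn' : InDiag lam a b' c :=
      ⟨hIn.1, le_trans hb1 hb, le_trans (by omega) hIn.2.2⟩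
    exact le_trans (ih hIn') (le_of_lt (hs.2.2.2.1 a b' c hIn' hIn))

lemma s_mono {n : ℕ} {lam : ℕ → ℕ → ℕ} {s : ℕ → ℕ → ℕ → ℕ}
    (hlam : IsMultipartition r n lam) (hs : IsStdTableau n lam s)
    {a b a' b' c : ℕ} (ha1 : 1 ≤ a) (hb1 : 1 ≤ b) (ha : a ≤ a') (hb : b ≤ b')
    (hIn : InDiag lam a' b' c) : s a b c ≤ s a' b' c := by
  have hIn1 : InDiag lam a' b c := ⟨le_trans ha1 ha, hb1, le_trans hb hIn.2.2⟩
  exact le_trans (s_col_le hlam hs ha1 ha hIn1) (s_row_le hlam hs hb1 hb hIn)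

lemma cont_eq (ε : ℂ) (d : ℕ) {n : ℕ} {lam : ℕ → ℕ → ℕ} {s : ℕ → ℕ → ℕ → ℕ}
    (hs : IsStdTableau n lam s) {a b c k : ℕ} (hIn : InDiag lam a b c)
    (hk : s a b c = k) : cont ε d lam s k = contpos ε d a b c := by
  classical
  have hex : ∃ x : ℕ × ℕ × ℕ, InDiag lam x.1 x.2.1 x.2.2 ∧ s x.1 x.2.1 x.2.2 = k :=
    ⟨(a, b, c), hIn, hk⟩
  rw [cont, dif_pos hex]
  obtain ⟨hd1, hk1⟩ := hex.choose_spec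
  have hkr := hs.2.1 a b c hIn
  obtain ⟨x0, hx0, huniq⟩ := hs.2.2.1 k (by omega) (by omega)
  have e1 : hex.choose = (a, b, c) := by
    rw [huniq hex.choose ⟨hd1, hk1⟩, huniq (a, b, c) ⟨hIn, hk⟩]
  rw [e1]

/-- The geometric contradiction: two addable positions for `k` on the same diagonal of the
same component, with strictly different rows, are impossible. -/
lemma aux_geom {n : ℕ} {lam mu : ℕ → ℕ → ℕ} {s t : ℕ → ℕ → ℕ → ℕ}
    (hlam : IsMultipartition r n lam) (hmu : IsMultipartition r' n mu)
    (hs : IsStdTableau n lam s) (ht : IsStdTableau n mu t)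
    (k : ℕ)
    (IH : ∀ j, j < k → ∀ a b c a' b' c', 1 ≤ j → j ≤ n →
      InDiag lam a b c → s a b c = j → InDiag mu a' b' c' → t a' b' c' = j →
      (a, b, c) = ((a', b', c') : ℕ × ℕ × ℕ))
    {a b c a' b' : ℕ} (hInS : InDiag lam a b c) (hsk : s a b c = k)
    (hInT : InDiag mu a' b' c) (htk : t a' b' c = k)
    (hm : (b : ℤ) - (a : ℤ) = (b' : ℤ) - (a' : ℤ)) (hlt : a < a') : False := by
  have ha1 : 1 ≤ a := hInS.1
  have hb1 : 1 ≤ b := hInS.2.1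
  have hb' : b + 1 ≤ b' := by omega
  have hz : InDiag mu (a' - 1) b' c :=
    ⟨by omega, hInT.2.1, le_trans hInT.2.2 (lam_antitone hmu (by omega) (by omega))⟩
  have htz_lt : t (a' - 1) b' c < k := by
    have hstep := ht.2.2.2.2 (a' - 1) b' c hz (by rw [Nat.sub_add_cancel (by omega)] ; exact hInT)
    rw [Nat.sub_add_cancel (by omega), htk] at hstep
    exact hstep
  have hjr := ht.2.1 _ _ _ hz
  obtain ⟨x, ⟨hxIn, hxv⟩, -⟩ := hs.2.2.1 (t (a' - 1) b' c) (by omega) (by omega)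
  have hx := IH (t (a' - 1) b' c) (by omega) x.1 x.2.1 x.2.2 (a' - 1) b' c
    (by omega) (by omega) hxIn hxv hz rfl
  have e1 : x.1 = a' - 1 := congrArg Prod.fst hx
  have e2 : x.2.1 = b' := congrArg (fun z : ℕ × ℕ × ℕ => z.2.1) hx
  have e3 : x.2.2 = c := congrArg (fun z : ℕ × ℕ × ℕ => z.2.2) hx
  rw [e1, e2, e3] at hxIn hxv
  -- hxIn : InDiag lam (a'-1) b' c, hxv : s (a'-1) b' c = t (a'-1) b' c
  have hIn2 : InDiag lam a b' c :=
    ⟨ha1, by omega, le_trans hxIn.2.2 (lam_antitone hlam ha1 (by omega))⟩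
  have h1 : s a b' c ≤ t (a' - 1) b' c := by
    rw [← hxv]
    exact s_mono hlam hs ha1 (by omega) (by omega) le_rfl hxIn
  have hIn3 : InDiag lam a (b + 1) c := ⟨ha1, by omega, le_trans hb' hIn2.2.2⟩
  have h2 : s a b c < s a (b + 1) c := hs.2.2.2.1 a b c hInS hIn3
  have h3 : s a (b + 1) c ≤ s a b' c := s_mono hlam hs ha1 (by omega) le_rfl hb' hIn2
  omega

end MPT

/-- Fix `n, p, d ≥ 1` and `r = p * d`; let `ε̇ ∈ ℂ` be a primitive `p`-th root
of unity and `F = ℚ(ε̇)(q̇, Q̇_1, …, Q̇_d)`.  Let `λ` and `μ` be `r`-multipartitions of `n`, let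
`s` be a standard `λ`-tableau and `t` a standard `μ`-tableau.  Then `s = t` (in particular
`λ = μ`) if and only if `cont_s(k) = cont_t(k)` for all `1 ≤ k ≤ n`. -/
theorem stmt_17 (n p d : ℕ) (hn : 1 ≤ n) (hp : 1 ≤ p) (hd : 1 ≤ d)
    (ε : ℂ) (hε : IsPrimitiveRoot ε p)
    (lam mu : ℕ → ℕ → ℕ)
    (hlam : MPT.IsMultipartition (p * d) n lam) (hmu : MPT.IsMultipartition (p * d) n mu)
    (s t : ℕ → ℕ → ℕ → ℕ)
    (hs : MPT.IsStdTableau n lam s) (ht : MPT.IsStdTableau n mu t) :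
    (s = t ∧ lam = mu) ↔
      ∀ k : ℕ, 1 ≤ k → k ≤ n → MPT.cont ε d lam s k = MPT.cont ε d mu t k := by
  classical
  constructor
  · rintro ⟨hst, hlm⟩
    subst hst; subst hlm
    intro k _ _; rfl
  · intro hcont
    have main : ∀ k, ∀ a b c a' b' c', 1 ≤ k → k ≤ n →
        MPT.InDiag lam a b c → s a b c = k → MPT.InDiag mu a' b' c' → t a' b' c' = k →
        (a, b, c) = ((a', b', c') : ℕ × ℕ × ℕ) := by
      intro k
      induction k using Nat.strong_induction_on with
      | _ k IH =>
      intro a b c a' b' c' hk1 hkn hInS hsk hInT htk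
      have hc := hcont k hk1 hkn
      rw [MPT.cont_eq ε d hs hInS hsk, MPT.cont_eq ε d ht hInT htk] at hc
      rw [MPT.contpos, MPT.contpos] at hc
      have hcr := MPT.comp_range hlam hInS
      have hcr' := MPT.comp_range hmu hInT
      have hd0 : 0 < d := hd
      have hjlt : (c - 1) / d < p := by
        rw [Nat.div_lt_iff_lt_mul hd0]; omega
      have hjlt' : (c' - 1) / d < p := by
        rw [Nat.div_lt_iff_lt_mul hd0]; omega
      have hmod : (c - 1) % d < d := Nat.mod_lt _ hd0
      have hmod' : (c' - 1) % d < d := Nat.mod_lt _ hd0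
      obtain ⟨hj, hm, hcm⟩ := MPT.key ε p d hp hd hε _ _ _ _ _ _ hjlt hjlt'
        (by omega) (by omega) (by omega) (by omega) hc
      have hceq : c = c' := by
        have e0 : (c - 1) % d = (c' - 1) % d := by omega
        have e1 : c - 1 = c' - 1 := by
          rw [← Nat.div_add_mod (c - 1) d, ← Nat.div_add_mod (c' - 1) d, hj, e0]
        omega
      subst hceq
      rcases lt_trichotomy a a' with hlt | heq | hgt
      · exact (MPT.aux_geom hlam hmu hs ht k
          (fun j hj => IH j hj) hInS hsk hInT htk hm hlt).elim
      · have hb : b = b' := by omega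
        rw [heq, hb]
      · have IH' : ∀ j, j < k → ∀ a1 b1 c1 a1' b1' c1', 1 ≤ j → j ≤ n →
            MPT.InDiag mu a1 b1 c1 → t a1 b1 c1 = j → MPT.InDiag lam a1' b1' c1' →
            s a1' b1' c1' = j → (a1, b1, c1) = ((a1', b1', c1') : ℕ × ℕ × ℕ) :=
          fun j hjk a1 b1 c1 a1' b1' c1' h1 h2 hy hty hx hsx =>
            (IH j hjk a1' b1' c1' a1 b1 c1 h1 h2 hx hsx hy hty).symm
        exact (MPT.aux_geom hmu hlam ht hs k IH'
          hInT htk hInS hsk hm.symm hgt).elim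
    have hdiag : ∀ a b c, MPT.InDiag lam a b c → MPT.InDiag mu a b c ∧ t a b c = s a b c := by
      intro a b c hIn
      have hk1 := hs.2.1 a b c hIn
      obtain ⟨y, ⟨hyIn, hyv⟩, -⟩ := ht.2.2.1 (s a b c) (by omega) (by omega)
      have hx := main (s a b c) a b c y.1 y.2.1 y.2.2 (by omega) (by omega) hIn rfl hyIn hyv
      have e1 : a = y.1 := congrArg Prod.fst hx
      have e2 : b = y.2.1 := congrArg (fun z : ℕ × ℕ × ℕ => z.2.1) hx
      have e3 : c = y.2.2 := congrArg (fun z : ℕ × ℕ × ℕ => z.2.2) hx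
      rw [← e1, ← e2, ← e3] at hyIn hyv
      exact ⟨hyIn, hyv⟩
    have hdiag' : ∀ a b c, MPT.InDiag mu a b c → MPT.InDiag lam a b c ∧ s a b c = t a b c := by
      intro a b c hIn
      have hk1 := ht.2.1 a b c hIn
      obtain ⟨y, ⟨hyIn, hyv⟩, -⟩ := hs.2.2.1 (t a b c) (by omega) (by omega)
      have hx := (main (t a b c) y.1 y.2.1 y.2.2 a b c (by omega) (by omega) hyIn hyv hIn rfl).symm
      have e1 : a = y.1 := congrArg Prod.fst hx
      have e2 : b = y.2.1 := congrArg (fun z : ℕ × ℕ × ℕ => z.2.1) hx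
      have e3 : c = y.2.2 := congrArg (fun z : ℕ × ℕ × ℕ => z.2.2) hx
      rw [← e1, ← e2, ← e3] at hyIn hyv
      exact ⟨hyIn, hyv⟩
    constructor
    · funext a b c
      by_cases hIn : MPT.InDiag lam a b c
      · exact (hdiag a b c hIn).2.symm
      · have hIn' : ¬ MPT.InDiag mu a b c := fun h => hIn (hdiag' a b c h).1
        rw [hs.1 a b c hIn, ht.1 a b c hIn']
    · funext c a
      rcases Nat.eq_zero_or_pos a with rfl | ha
      · rw [hlam.2.1 c, hmu.2.1 c]
      · apply le_antisymm
        · rcases Nat.eq_zero_or_pos (lam c a) with h0 | h0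
          · omega
          · exact (hdiag a (lam c a) c ⟨ha, h0, le_rfl⟩).1.2.2
        · rcases Nat.eq_zero_or_pos (mu c a) with h0 | h0
          · omega
          · exact (hdiag' a (mu c a) c ⟨ha, h0, le_rfl⟩).1.2.2
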